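/- Suppose the polynomial F(u) = Σ_{n=0}^{N} b_n u^n of degree N with complex coefficients satisfies the functional equation F(u) = ω c^N u^N F(1/(c^2 u)) for some nonzero constants ω, c ∈ ℂ (meaning b_n = ω c^{2n - N} b'_{N-n} where b'_n are the coefficients appearing on the dual side). Then for any 0 ≤ A < N, F(1/c) = Σ_{n=0}^{A} b_n c^{-n} + ω Σ_{n=0}^{N - A - 1} b'_n c^{-n}. -/

import Mathlib

/-- abstract approximate functional equation. If the degree-`N`
polynomial `F(u) = Σ_{n≤N} b_n u^n` satisfies `F(u) = ω c^N u^N F'(1/(c²u))`,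
i.e. `b_n = ω c^{2n-N} b'_{N-n}`, with `ω, c ≠ 0`, then for `0 ≤ A < N`,
`F(1/c) = Σ_{n=0}^{A} b_n c^{-n} + ω Σ_{n=0}^{N-A-1} b'_n c^{-n}`. -/
theorem stmt_14 (N A : ℕ) (hA : A < N) (b b' : ℕ → ℂ) (ω c : ℂ)
    (hω : ω ≠ 0) (hc : c ≠ 0)
    (hfe : ∀ n ≤ N, b n = ω * c ^ (2 * (n : ℤ) - (N : ℤ)) * b' (N - n)) :
    ∑ n ∈ Finset.range (N + 1), b n * c⁻¹ ^ n
      = ∑ n ∈ Finset.range (A + 1), b n * c⁻¹ ^ n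
        + ω * ∑ n ∈ Finset.range (N - A), b' n * c⁻¹ ^ n := by
  have hN1 : N + 1 = (A + 1) + (N - A) := by omega
  rw [hN1, Finset.sum_range_add]
  congr 1
  rw [← Finset.sum_range_reflect (fun i => b' i * c⁻¹ ^ i) (N - A), Finset.mul_sum]
  apply Finset.sum_congr rfl
  intro i hi
  rw [Finset.mem_range] at hi
  rw [hfe (A + 1 + i) (by omega)]
  have hm : N - (A + 1 + i) = N - A - 1 - i := by omega
  rw [hm]
  have hp : ∀ k : ℕ, c⁻¹ ^ k = c ^ (-(k : ℤ)) := by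
    intro k
    rw [zpow_neg, zpow_natCast, inv_pow]
  rw [hp, hp]
  rw [mul_assoc, mul_assoc]
  congr 1
  rw [mul_comm (c ^ _) _, mul_assoc]
  congr 1
  rw [← zpow_add₀ hc]
  congr 1
  have : ((N - A - 1 - i : ℕ) : ℤ) = (N : ℤ) - A - 1 - i := by omega
  rw [this]
  push_cast
  ring
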